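/- Let D be a domain in ℝ^N, N ≥ 2. A function u : D → [-∞,∞) is 1-quasi-nearly subharmonic if and only if it is nearly subharmonic (equivalently, 1-quasi-nearly subharmonic n.s.). -/

import Mathlib

open MeasureTheory Metric Set Filter
open scoped ENNReal NNReal Topology

noncomputable section

/-- `ℝ^N` with the Euclidean metric. -/
abbrev Eucl (N : ℕ) := EuclideanSpace ℝ (Fin N)

/-- The positive part of an extended real number, as an element of `ℝ≥0∞`. -/
noncomputable def ERealPos (x : EReal) : ℝ≥0∞ :=
  if x = ⊤ then ⊤ else ENNReal.ofReal x.toReal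

/-- The (extended-real valued) Lebesgue integral of an extended-real valued function:
the upper integral of its positive part minus the upper integral of its negative part. -/
noncomputable def eIntegral {α : Type*} [MeasurableSpace α] (μ : Measure α)
    (f : α → EReal) : EReal :=
  ((∫⁻ a, ERealPos (f a) ∂μ : ℝ≥0∞) : EReal) - ((∫⁻ a, ERealPos (-(f a)) ∂μ : ℝ≥0∞) : EReal)

/-- `u(x) ≤ (K/(ν_N r^N)) ∫_{B(x,r)} u dm_N`; note that `ν_N r^N` is exactly the Lebesgue
measure of the ball `B^N(x,r)`. -/
def MeanIneqAt {N : ℕ} (K : ℝ) (u : Eucl N → EReal) (x : Eucl N) (r : ℝ) : Prop :=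
  u x ≤ ((K / (volume (ball x r)).toReal : ℝ) : EReal) *
    eIntegral (volume.restrict (ball x r)) u

/-- The mean value inequality with constant `K`, for all closed balls contained in `D`. -/
def MeanIneqOn {N : ℕ} (K : ℝ) (u : Eucl N → EReal) (D : Set (Eucl N)) : Prop :=
  ∀ x : Eucl N, ∀ r : ℝ, 0 < r → closedBall x r ⊆ D → MeanIneqAt K u x r

/-- `u⁺ ∈ L¹_loc(D)`: the positive part of `u` is integrable on every compact subset of `D`. -/
def PosPartLocInt {N : ℕ} (u : Eucl N → EReal) (D : Set (Eucl N)) : Prop :=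
  ∀ C : Set (Eucl N), C ⊆ D → IsCompact C → (∫⁻ x in C, ERealPos (u x) ∂volume) < ⊤

/-- `u ∈ L¹_loc(D)` for an extended-real valued `u`. -/
def ERealLocInt {N : ℕ} (u : Eucl N → EReal) (D : Set (Eucl N)) : Prop :=
  PosPartLocInt u D ∧ PosPartLocInt (fun x => -(u x)) D

/-- `u` is nearly subharmonic on `D`. -/
def NearlySubharmonicOn {N : ℕ} (u : Eucl N → EReal) (D : Set (Eucl N)) : Prop :=
  AEMeasurable u (volume.restrict D) ∧ PosPartLocInt u D ∧ MeanIneqOn 1 u D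

/-- `u` is `K`-quasi-nearly subharmonic n.s. (in the narrow sense) on `D`. -/
def QNSubharmonicNSOn {N : ℕ} (K : ℝ) (u : Eucl N → EReal) (D : Set (Eucl N)) : Prop :=
  AEMeasurable u (volume.restrict D) ∧ PosPartLocInt u D ∧ MeanIneqOn K u D

/-- `u_M := max{u, -M} + M`. -/
noncomputable def shiftPos {N : ℕ} (u : Eucl N → EReal) (M : ℝ) : Eucl N → EReal :=
  fun x => max (u x) ((-M : ℝ) : EReal) + ((M : ℝ) : EReal)

/-- `u` is `K`-quasi-nearly subharmonic on `D`. -/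
def QNSubharmonicOn {N : ℕ} (K : ℝ) (u : Eucl N → EReal) (D : Set (Eucl N)) : Prop :=
  AEMeasurable u (volume.restrict D) ∧ PosPartLocInt u D ∧
    ∀ M : ℝ, 0 ≤ M → MeanIneqOn K (shiftPos u M) D

/-- `u` is subharmonic on `D`: upper semicontinuous and satisfying the mean value
inequality on all closed balls contained in `D` (the constant `-∞` is allowed). -/
def SubharmonicOn {N : ℕ} (u : Eucl N → EReal) (D : Set (Eucl N)) : Prop :=
  UpperSemicontinuousOn u D ∧ MeanIneqOn 1 u D

/-- `h` is harmonic on `D`: continuous and satisfying the mean value equality. -/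
def HarmonicMVOn {N : ℕ} (h : Eucl N → ℝ) (D : Set (Eucl N)) : Prop :=
  ContinuousOn h D ∧ ∀ x : Eucl N, ∀ r : ℝ, 0 < r → closedBall x r ⊆ D →
    h x = ⨍ y in ball x r, h y ∂volume

/-- The Δ₂-condition for a function on `[0,∞)`. -/
def Delta2 (φ : ℝ → ℝ) : Prop :=
  ∃ C ≥ (1 : ℝ), ∀ t ≥ (0 : ℝ), φ (2 * t) ≤ C * φ t

/-- Permissible functions `ψ : [0,∞) → [0,∞)`. -/
def Permissible (ψ : ℝ → ℝ) : Prop :=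
  ∃ ψ₁ ψ₂ : ℝ → ℝ,
    (∀ t ≥ (0 : ℝ), 0 ≤ ψ₁ t) ∧ MonotoneOn ψ₁ (Ici 0) ∧ ConvexOn ℝ (Ici 0) ψ₁ ∧
    Delta2 ψ₁ ∧
    (∀ t ≥ (0 : ℝ), 0 ≤ ψ₂ t) ∧ StrictMonoOn ψ₂ (Ici 0) ∧
    (∀ s ≥ (0 : ℝ), ∃ t ≥ (0 : ℝ), ψ₂ t = s) ∧
    (∃ C ≥ (1 : ℝ), ∀ s a b : ℝ, 0 ≤ s → 0 ≤ a → 0 ≤ b →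
      ψ₂ a = s → ψ₂ b = 2 * s → b ≤ C * a) ∧
    (∃ C > (0 : ℝ), ∀ s t : ℝ, 0 ≤ s → s ≤ t → C * (ψ₂ t / t) ≤ ψ₂ s / s) ∧
    (∀ t ≥ (0 : ℝ), ψ t = ψ₂ (ψ₁ t))

/-- `ψ` is non-constant on `[0,∞)`. -/
def NonConstantOnNonneg (ψ : ℝ → ℝ) : Prop :=
  ∃ s ≥ (0 : ℝ), ∃ t ≥ (0 : ℝ), ψ s ≠ ψ t

/-- `u` is a `λ`-Harnack function on `D`. -/
def HarnackOn {N : ℕ} (lam : ℝ) (u : Eucl N → ℝ) (D : Set (Eucl N)) : Prop :=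
  ContinuousOn u D ∧ (∀ x ∈ D, 0 ≤ u x) ∧
    ∃ C ≥ (1 : ℝ), ∀ x : Eucl N, ∀ r : ℝ, 0 < r → closedBall x r ⊆ D →
      ∀ z₁ ∈ closedBall x (lam * r), ∀ z₂ ∈ closedBall x (lam * r), u z₁ ≤ C * u z₂

/-- Lebesgue measure of the unit ball in `ℝ^N`. -/
noncomputable def unitBallVol (N : ℕ) : ℝ := (volume (ball (0 : Eucl N) 1)).toReal

/-- Identify `ℝ^m × ℝ^n` with `ℝ^(m+n)`. -/
noncomputable def joinE {m n : ℕ} (x : Eucl m) (y : Eucl n) : Eucl (m + n) :=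
  (EuclideanSpace.equiv (Fin (m + n)) ℝ).symm
    (Fin.append (EuclideanSpace.equiv (Fin m) ℝ x) (EuclideanSpace.equiv (Fin n) ℝ y))

/-- The section `Ω(y) = {x ∈ ℝ^m : (x,y) ∈ Ω}`. -/
def secY {m n : ℕ} (Ω : Set (Eucl (m + n))) (y : Eucl n) : Set (Eucl m) :=
  {x : Eucl m | joinE x y ∈ Ω}

/-- The section `Ω(x) = {y ∈ ℝ^n : (x,y) ∈ Ω}`. -/
def secX {m n : ℕ} (Ω : Set (Eucl (m + n))) (x : Eucl m) : Set (Eucl n) :=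
  {y : Eucl n | joinE x y ∈ Ω}

/- ===== auxiliary lemmas ===== -/

lemma measurable_ERealPos : Measurable ERealPos := by
  unfold ERealPos
  exact Measurable.ite (measurableSet_singleton ⊤) measurable_const
    (ENNReal.measurable_ofReal.comp measurable_ereal_toReal)

lemma ERealPos_coe (t : ℝ) : ERealPos (t : EReal) = ENNReal.ofReal t := by
  simp [ERealPos]

lemma ERealPos_bot : ERealPos ⊥ = 0 := by simp [ERealPos]

lemma ERealPos_neg_of_nonneg {w : EReal} (hw : 0 ≤ w) : ERealPos (-w) = 0 := by
  induction w with
  | bot => simp at hw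
  | coe t =>
    rw [← EReal.coe_neg, ERealPos_coe, ENNReal.ofReal_eq_zero]
    simpa using EReal.coe_nonneg.mp hw
  | top => simp [ERealPos]

lemma ennreal_coe_ereal_eq {p : ℝ≥0∞} (hp : p ≠ ⊤) :
    (p : EReal) = ((p.toReal : ℝ) : EReal) := by
  conv_lhs => rw [← ENNReal.ofReal_toReal hp]
  rw [EReal.coe_ennreal_ofReal, max_eq_left ENNReal.toReal_nonneg]

lemma key_id (v : EReal) (hv : v ≠ ⊤) (M : ℝ) (hM : 0 ≤ M) :
    ERealPos (max v ((-M : ℝ) : EReal) + ((M : ℝ) : EReal)) +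
      min (ERealPos (-v)) (ENNReal.ofReal M)
    = ERealPos v + ENNReal.ofReal M := by
  induction v with
  | bot =>
    have h : max (⊥ : EReal) ((-M : ℝ) : EReal) = ((-M : ℝ) : EReal) := max_eq_right bot_le
    rw [h, ← EReal.coe_add, ERealPos_coe, ERealPos_bot]
    simp [ERealPos]
  | coe t =>
    have hmax : max ((t : ℝ) : EReal) ((-M : ℝ) : EReal) = ((max t (-M) : ℝ) : EReal) := by
      rcases le_total t (-M) with h | h
      · rw [max_eq_right (EReal.coe_le_coe_iff.mpr h), max_eq_right h]
      · rw [max_eq_left (EReal.coe_le_coe_iff.mpr h), max_eq_left h]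
    rw [hmax, ← EReal.coe_add, ERealPos_coe, ← EReal.coe_neg, ERealPos_coe, ERealPos_coe]
    rcases le_total 0 t with ht | ht
    · have h1 : max t (-M) = t := max_eq_left (by linarith)
      rw [h1, min_eq_left (ENNReal.ofReal_le_ofReal (by linarith)),
        ENNReal.ofReal_of_nonpos (neg_nonpos.mpr ht), add_zero, ENNReal.ofReal_add ht hM]
    · rcases le_total (-M) t with ht2 | ht2
      · have h1 : max t (-M) = t := max_eq_left ht2
        rw [h1, min_eq_left (ENNReal.ofReal_le_ofReal (by linarith)),
          ENNReal.ofReal_of_nonpos ht, zero_add,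
          ← ENNReal.ofReal_add (by linarith : (0:ℝ) ≤ t + M) (by linarith : (0:ℝ) ≤ -t)]
        congr 1
        ring
      · have h1 : max t (-M) = -M := max_eq_right ht2
        rw [h1, min_eq_right (ENNReal.ofReal_le_ofReal (by linarith)),
          ENNReal.ofReal_of_nonpos (by linarith : t ≤ 0)]
        simp
  | top => exact absurd rfl hv

lemma shiftPos_nonneg {N : ℕ} (u : Eucl N → EReal) (M : ℝ) (y : Eucl N) :
    0 ≤ shiftPos u M y := by
  have h : ((-M : ℝ) : EReal) + ((M : ℝ) : EReal) ≤ shiftPos u M y :=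
    add_le_add_left (le_max_right _ _) _
  rw [← EReal.coe_add, neg_add_cancel] at h
  exact_mod_cast h

lemma eIntegral_shift {N : ℕ} (u : Eucl N → EReal) (M : ℝ) (μ : Measure (Eucl N)) :
    eIntegral μ (shiftPos u M) = ((∫⁻ y, ERealPos (shiftPos u M y) ∂μ : ℝ≥0∞) : EReal) := by
  unfold eIntegral
  have h : ∀ y, ERealPos (-(shiftPos u M y)) = 0 := fun y =>
    ERealPos_neg_of_nonneg (shiftPos_nonneg u M y)
  simp [h]

lemma sup_min_ofReal_nat (t : ℝ≥0∞) : (⨆ n : ℕ, min t (ENNReal.ofReal n)) = t := by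
  refine le_antisymm (iSup_le fun n => min_le_left _ _) ?_
  rcases eq_top_or_lt_top t with h | h
  · rw [h]
    calc (⊤ : ℝ≥0∞) = ⨆ n : ℕ, (n : ℝ≥0∞) := ENNReal.iSup_natCast.symm
      _ ≤ ⨆ n : ℕ, min ⊤ (ENNReal.ofReal n) := by
          refine iSup_mono fun n => ?_
          simp [ENNReal.ofReal_natCast]
  · obtain ⟨n, hn⟩ := exists_nat_gt t.toReal
    have ht : t ≤ ENNReal.ofReal n := by
      rw [← ENNReal.ofReal_toReal h.ne]
      exact ENNReal.ofReal_le_ofReal hn.le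
    exact le_trans (le_of_eq (min_eq_left ht).symm) (le_iSup (fun n : ℕ => min t (ENNReal.ofReal n)) n)

lemma mean_core {N : ℕ} (u : Eucl N → EReal) (x : Eucl N) (r : ℝ) (hr : 0 < r)
    (hne : ∀ y ∈ closedBall x r, u y ≠ ⊤)
    (hmeas : AEMeasurable u (volume.restrict (ball x r)))
    (hP : (∫⁻ y in ball x r, ERealPos (u y)) < ⊤) :
    MeanIneqAt 1 u x r ↔ ∀ M : ℝ, 0 ≤ M → MeanIneqAt 1 (shiftPos u M) x r := by
  have hBmeas : MeasurableSet (ball x r) := measurableSet_ball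
  have hvBne : volume (ball x r) ≠ ⊤ := measure_ball_lt_top.ne
  have hvBpos : 0 < volume (ball x r) := measure_ball_pos volume x hr
  set V := (volume (ball x r)).toReal with hV
  have hVpos : 0 < V := ENNReal.toReal_pos hvBpos.ne' hvBne
  have hneB : ∀ y ∈ ball x r, u y ≠ ⊤ := fun y hy => hne y (ball_subset_closedBall hy)
  have hxne : u x ≠ ⊤ := hne x (mem_closedBall_self hr.le)
  set P := ∫⁻ y in ball x r, ERealPos (u y) with hPdef
  set Nneg := ∫⁻ y in ball x r, ERealPos (-(u y)) with hNdef
  set c : ℝ → ℝ≥0∞ :=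
    fun M => ∫⁻ y in ball x r, min (ERealPos (-(u y))) (ENNReal.ofReal M) with hcdef
  set a : ℝ → ℝ≥0∞ := fun M => ∫⁻ y in ball x r, ERealPos (shiftPos u M y) with hadef
  have hg_meas : AEMeasurable (fun y => ERealPos (-(u y))) (volume.restrict (ball x r)) :=
    (measurable_ERealPos.comp continuous_neg.measurable).comp_aemeasurable hmeas
  have hid : ∀ M : ℝ, 0 ≤ M → a M + c M = P + ENNReal.ofReal M * volume (ball x r) := by
    intro M hM
    have h1 : (∫⁻ y in ball x r, (ERealPos (shiftPos u M y) +
        min (ERealPos (-(u y))) (ENNReal.ofReal M))) = a M + c M :=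
      lintegral_add_right' _ (hg_meas.min aemeasurable_const)
    have h2 : (∫⁻ y in ball x r, (ERealPos (u y) + ENNReal.ofReal M))
        = P + ENNReal.ofReal M * volume (ball x r) := by
      rw [lintegral_add_right' _ aemeasurable_const, setLIntegral_const]
    have h3 : (∫⁻ y in ball x r, (ERealPos (shiftPos u M y) +
        min (ERealPos (-(u y))) (ENNReal.ofReal M)))
        = ∫⁻ y in ball x r, (ERealPos (u y) + ENNReal.ofReal M) :=
      setLIntegral_congr_fun hBmeas (fun y hy =>
        key_id (u y) (hneB y hy) M hM)
    rw [← h1, h3, h2]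
  have haM_lt : ∀ M : ℝ, 0 ≤ M → a M < ⊤ := by
    intro M hM
    have hle : a M ≤ P + ENNReal.ofReal M * volume (ball x r) :=
      (hid M hM) ▸ self_le_add_right _ _
    exact lt_of_le_of_lt hle (ENNReal.add_lt_top.mpr
      ⟨hP, ENNReal.mul_lt_top ENNReal.ofReal_lt_top hvBne.lt_top⟩)
  have hcM_lt : ∀ M : ℝ, 0 ≤ M → c M < ⊤ := by
    intro M hM
    have hle : c M ≤ P + ENNReal.ofReal M * volume (ball x r) :=
      (hid M hM) ▸ self_le_add_left _ _
    exact lt_of_le_of_lt hle (ENNReal.add_lt_top.mpr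
      ⟨hP, ENNReal.mul_lt_top ENNReal.ofReal_lt_top hvBne.lt_top⟩)
  have hc_le : ∀ M : ℝ, c M ≤ Nneg := fun M => lintegral_mono fun y => min_le_left _ _
  have hsup : (⨆ n : ℕ, c (n : ℝ)) = Nneg := by
    rw [hNdef, ← lintegral_iSup' (fun n => hg_meas.min aemeasurable_const)
      (ae_of_all _ fun y m n hmn =>
        min_le_min le_rfl (ENNReal.ofReal_le_ofReal (Nat.cast_le.mpr hmn)))]
    exact lintegral_congr fun y => (sup_min_ofReal_nat _)
  have hreal : ∀ M : ℝ, 0 ≤ M → (a M).toReal + (c M).toReal = P.toReal + M * V := by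
    intro M hM
    have h := congrArg ENNReal.toReal (hid M hM)
    rwa [ENNReal.toReal_add (haM_lt M hM).ne (hcM_lt M hM).ne,
      ENNReal.toReal_add hP.ne (ENNReal.mul_ne_top ENNReal.ofReal_ne_top hvBne),
      ENNReal.toReal_mul, ENNReal.toReal_ofReal hM] at h
  have hshift_iff : ∀ M : ℝ, MeanIneqAt 1 (shiftPos u M) x r ↔
      shiftPos u M x ≤ (((1 / V : ℝ)) : EReal) * ((a M : ℝ≥0∞) : EReal) := by
    intro M
    unfold MeanIneqAt
    rw [eIntegral_shift]
  constructor
  · -- nearly subharmonic ⇒ all shifts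
    intro h M hM
    have hu : u x ≤ (((1 / V : ℝ)) : EReal) * ((P : EReal) - (Nneg : EReal)) := h
    rw [hshift_iff M]
    rcases le_or_gt (u x) (((-M : ℝ) : EReal)) with hcase | hcase
    · have h0 : shiftPos u M x = 0 := by
        show max (u x) ((-M : ℝ) : EReal) + ((M : ℝ) : EReal) = 0
        rw [max_eq_right hcase, ← EReal.coe_add, neg_add_cancel, EReal.coe_zero]
      rw [h0, ennreal_coe_ereal_eq (haM_lt M hM).ne, ← EReal.coe_mul]
      exact EReal.coe_nonneg.mpr (mul_nonneg (by positivity) ENNReal.toReal_nonneg)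
    · have hNne : Nneg ≠ ⊤ := by
        intro htop
        rw [htop, EReal.coe_ennreal_top, EReal.sub_top,
          EReal.mul_bot_of_pos (EReal.coe_pos.mpr (by positivity : (0:ℝ) < 1 / V))] at hu
        exact absurd (le_bot_iff.mp hu) (fun hb => absurd hcase (by rw [hb]; exact not_lt.mpr bot_le))
      have hxbot : u x ≠ ⊥ := fun hb => absurd hcase (by rw [hb]; exact not_lt.mpr bot_le)
      set t := (u x).toReal with htdef
      have hux : u x = ((t : ℝ) : EReal) := (EReal.coe_toReal hxne hxbot).symm
      have htM : -M ≤ t := le_of_lt (EReal.coe_lt_coe_iff.mp (hux ▸ hcase))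
      have hu' : t ≤ (1 / V) * (P.toReal - Nneg.toReal) := by
        rw [hux, ennreal_coe_ereal_eq hP.ne, ennreal_coe_ereal_eq hNne, ← EReal.coe_sub,
          ← EReal.coe_mul, EReal.coe_le_coe_iff] at hu
        exact hu
      have hgoal : shiftPos u M x = (((t + M : ℝ)) : EReal) := by
        show max (u x) ((-M : ℝ) : EReal) + ((M : ℝ) : EReal) = _
        rw [hux, max_eq_left (EReal.coe_le_coe_iff.mpr (by linarith)), ← EReal.coe_add]
      rw [hgoal, ennreal_coe_ereal_eq (haM_lt M hM).ne, ← EReal.coe_mul, EReal.coe_le_coe_iff]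
      have h1 := hreal M hM
      have h2 : (c M).toReal ≤ Nneg.toReal := ENNReal.toReal_mono hNne (hc_le M)
      have keyle : P.toReal - Nneg.toReal + M * V ≤ (a M).toReal := by linarith
      have h3 : (1 / V) * (P.toReal - Nneg.toReal + M * V) ≤ (1 / V) * (a M).toReal :=
        mul_le_mul_of_nonneg_left keyle (by positivity)
      have h4 : (1 / V) * (P.toReal - Nneg.toReal + M * V)
          = (1 / V) * (P.toReal - Nneg.toReal) + M := by
        field_simp
      linarith
  · -- all shifts ⇒ nearly subharmonic
    intro h
    show u x ≤ (((1 / V : ℝ)) : EReal) * ((P : EReal) - (Nneg : EReal))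
    rcases eq_or_ne (u x) ⊥ with hbot | hbot
    · rw [hbot]; exact bot_le
    set t := (u x).toReal with htdef
    have hux : u x = ((t : ℝ) : EReal) := (EReal.coe_toReal hxne hbot).symm
    have hkey : ∀ n : ℕ, -(n : ℝ) ≤ t → t + n ≤ (1 / V) * (a n).toReal := by
      intro n hn
      have hh := (hshift_iff (n : ℝ)).mp (h (n : ℝ) (Nat.cast_nonneg n))
      have hsx : shiftPos u (n : ℝ) x = (((t + n : ℝ)) : EReal) := by
        show max (u x) ((-(n:ℝ) : ℝ) : EReal) + (((n:ℝ) : ℝ) : EReal) = _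
        rw [hux, max_eq_left (EReal.coe_le_coe_iff.mpr (by linarith)), ← EReal.coe_add]
      rw [hsx, ennreal_coe_ereal_eq (haM_lt (n : ℝ) (Nat.cast_nonneg n)).ne,
        ← EReal.coe_mul, EReal.coe_le_coe_iff] at hh
      exact hh
    have hcb : ∀ n : ℕ, -(n : ℝ) ≤ t → (c (n : ℝ)).toReal ≤ P.toReal - t * V := by
      intro n hn
      have h1 := hreal (n : ℝ) (Nat.cast_nonneg n)
      have h2 := hkey n hn
      have h3 : V * (t + n) ≤ V * ((1 / V) * (a (n : ℝ)).toReal) :=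
        mul_le_mul_of_nonneg_left h2 hVpos.le
      have h4 : V * ((1 / V) * (a (n : ℝ)).toReal) = (a (n : ℝ)).toReal := by
        field_simp
      rw [h4] at h3
      nlinarith
    obtain ⟨n0, hn0⟩ := exists_nat_ge (-t)
    have hcmono : ∀ m n : ℕ, m ≤ n → c (m : ℝ) ≤ c (n : ℝ) := fun m n hmn =>
      lintegral_mono fun y =>
        min_le_min le_rfl (ENNReal.ofReal_le_ofReal (Nat.cast_le.mpr hmn))
    have hNle : Nneg ≤ ENNReal.ofReal (P.toReal - t * V) := by
      rw [← hsup]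
      refine iSup_le fun n => le_trans (hcmono n (max n n0) (le_max_left _ _)) ?_
      have hge : -((max n n0 : ℕ) : ℝ) ≤ t := by
        have hcast : (n0 : ℝ) ≤ ((max n n0 : ℕ) : ℝ) := Nat.cast_le.mpr (le_max_right _ _)
        linarith
      have hc := hcb (max n n0) hge
      have hb0 : (0 : ℝ) ≤ P.toReal - t * V := le_trans ENNReal.toReal_nonneg hc
      exact (ENNReal.le_ofReal_iff_toReal_le
        (hcM_lt _ (Nat.cast_nonneg _)).ne hb0).mpr hc
    have hNne : Nneg ≠ ⊤ := (lt_of_le_of_lt hNle ENNReal.ofReal_lt_top).ne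
    have hfin : t ≤ (1 / V) * (P.toReal - Nneg.toReal) := by
      refine le_of_forall_pos_le_add fun ε hε => ?_
      have hclose : ∃ m : ℕ, -(m : ℝ) ≤ t ∧ Nneg ≤ c (m : ℝ) + ENNReal.ofReal (V * ε) := by
        by_cases hz : Nneg ≤ ENNReal.ofReal (V * ε)
        · exact ⟨n0, by linarith, le_trans hz (le_add_self)⟩
        · push_neg at hz
          have hlt : Nneg - ENNReal.ofReal (V * ε) < Nneg :=
            ENNReal.sub_lt_self hNne
              (fun h0 => by simp [h0] at hz)
              (fun h0 => by
                have : (0:ℝ≥0∞) < ENNReal.ofReal (V * ε) :=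
                  ENNReal.ofReal_pos.mpr (by positivity)
                simp [h0] at this)
          rw [← hsup] at hlt
          obtain ⟨n1, hn1⟩ := lt_iSup_iff.mp hlt
          rw [hsup] at hn1
          refine ⟨max n1 n0, ?_, ?_⟩
          · have hcast : (n0 : ℝ) ≤ ((max n1 n0 : ℕ) : ℝ) := Nat.cast_le.mpr (le_max_right _ _)
            linarith
          · have : Nneg ≤ c (n1 : ℝ) + ENNReal.ofReal (V * ε) :=
              tsub_le_iff_right.mp hn1.le
            exact le_trans this (add_le_add_left (hcmono n1 (max n1 n0) (le_max_left _ _)) _)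
      obtain ⟨m, hm1, hm2⟩ := hclose
      have hcm_lt := hcM_lt (m : ℝ) (Nat.cast_nonneg m)
      have hm2' : Nneg.toReal ≤ (c (m : ℝ)).toReal + V * ε := by
        have := ENNReal.toReal_mono
          (by exact ENNReal.add_ne_top.mpr ⟨hcm_lt.ne, ENNReal.ofReal_ne_top⟩) hm2
        rwa [ENNReal.toReal_add hcm_lt.ne ENNReal.ofReal_ne_top,
          ENNReal.toReal_ofReal (by positivity)] at this
      have h1 := hreal (m : ℝ) (Nat.cast_nonneg m)
      have h2 := hkey m hm1
      -- t + m ≤ (1/V) * (a m).toReal, (a m).toReal = P.toReal + m V - (c m).toReal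
      have h3 : (a (m : ℝ)).toReal = P.toReal + m * V - (c (m : ℝ)).toReal := by linarith
      rw [h3] at h2
      have h4 : (1 / V) * (P.toReal + m * V - (c (m : ℝ)).toReal)
          = (1 / V) * (P.toReal - (c (m : ℝ)).toReal) + m := by field_simp; ring
      have h5 : t ≤ (1 / V) * (P.toReal - (c (m : ℝ)).toReal) := by linarith
      have h6 : (1 / V) * (P.toReal - (c (m : ℝ)).toReal)
          ≤ (1 / V) * (P.toReal - Nneg.toReal + V * ε) := by
        apply mul_le_mul_of_nonneg_left _ (by positivity)
        linarith
      have h7 : (1 / V) * (P.toReal - Nneg.toReal + V * ε)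
          = (1 / V) * (P.toReal - Nneg.toReal) + ε := by field_simp
      linarith
    rw [hux, ennreal_coe_ereal_eq hP.ne, ennreal_coe_ereal_eq hNne, ← EReal.coe_sub,
      ← EReal.coe_mul, EReal.coe_le_coe_iff]
    exact hfin

/-- `u` is `1`-quasi-nearly subharmonic iff it is nearly subharmonic,
equivalently `1`-quasi-nearly subharmonic n.s. -/
theorem qns_one_iff_nearlySubharmonic
    {N : ℕ} (hN : 2 ≤ N) (D : Set (Eucl N)) (hDopen : IsOpen D) (hDconn : IsConnected D)
    (u : Eucl N → EReal) (hu_top : ∀ x ∈ D, u x ≠ ⊤) :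
    (QNSubharmonicOn 1 u D ↔ NearlySubharmonicOn u D) ∧
    (NearlySubharmonicOn u D ↔ QNSubharmonicNSOn 1 u D) := by
  have hball : ∀ (x : Eucl N) (r : ℝ), 0 < r → closedBall x r ⊆ D →
      AEMeasurable u (volume.restrict D) → PosPartLocInt u D →
      (MeanIneqAt 1 u x r ↔ ∀ M : ℝ, 0 ≤ M → MeanIneqAt 1 (shiftPos u M) x r) := by
    intro x r hr hsub hm hl
    refine mean_core u x r hr (fun y hy => hu_top y (hsub hy)) ?_ ?_
    · have hmm := hm.restrict (s := ball x r)
      rwa [Measure.restrict_restrict measurableSet_ball,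
        inter_eq_self_of_subset_left ((ball_subset_closedBall).trans hsub)] at hmm
    · exact lt_of_le_of_lt (lintegral_mono_set ball_subset_closedBall)
        (hl (closedBall x r) hsub (isCompact_closedBall x r))
  refine ⟨?_, Iff.rfl⟩
  constructor
  · rintro ⟨hm, hl, hq⟩
    exact ⟨hm, hl, fun x r hr hsub =>
      (hball x r hr hsub hm hl).mpr (fun M hM => hq M hM x r hr hsub)⟩
  · rintro ⟨hm, hl, hn⟩
    exact ⟨hm, hl, fun M hM x r hr hsub =>
      (hball x r hr hsub hm hl).mp (hn x r hr hsub) M hM⟩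
end
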